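/- The filling process has the diamond property: if P filling-moves to Q and P filling-moves to R with Q ≠ R, then there exists a set T such that Q filling-moves to T and R filling-moves to T. -/

import Mathlib

open scoped symmDiff

/-- The left translate `gS` of a finite shape `S` in a group `G`. -/
def gset {G : Type*} [Group G] (g : G) (S : Finset G) : Set G :=
  (fun s => g * s) '' (S : Set G)

/-- A `(C,S)`-filling move: `P ⊊ Q`, some translate `gS` meets `P` in exactly
`|S| - 1` elements, and `Q = P ∪ gC`. -/
def FillMove {G : Type*} [Group G] (C S : Finset G) (P Q : Set G) : Prop :=
  P ⊂ Q ∧ ∃ g : G, (P ∩ gset g S).ncard = S.card - 1 ∧ Q = P ∪ gset g C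

lemma gset_mono {G : Type*} [Group G] {C S : Finset G} (hCS : C ⊆ S) (g : G) :
    gset g C ⊆ gset g S :=
  Set.image_mono (by exact_mod_cast hCS)

lemma gset_ncard {G : Type*} [Group G] (g : G) (S : Finset G) :
    (gset g S).ncard = S.card := by
  rw [gset, Set.ncard_image_of_injective _ (mul_right_injective g), Set.ncard_coe_finset]

lemma fill_aux {G : Type*} [Group G] {C S : Finset G} (hCS : C ⊆ S) {P Q : Set G} {g : G}
    (hcard : (P ∩ gset g S).ncard = S.card - 1) (hQeq : Q = P ∪ gset g C) (hss : P ⊂ Q) :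
    ∃ x, x ∉ P ∧ x ∈ gset g C ∧ gset g S \ P = {x} ∧ Q = insert x P := by
  obtain ⟨y, hyQ, hyP⟩ := Set.not_subset.1 hss.2
  have hyC : y ∈ gset g C := by
    rcases (hQeq ▸ hyQ) with h | h
    · exact absurd h hyP
    · exact h
  have hyS : y ∈ gset g S := gset_mono hCS g hyC
  have hfin : (gset g S).Finite := S.finite_toSet.image _
  have hkey := Set.ncard_inter_add_ncard_diff_eq_ncard (gset g S) P hfin
  rw [Set.inter_comm, hcard, gset_ncard] at hkey
  have hpos : 1 ≤ S.card := by
    have : S.Nonempty := by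
      obtain ⟨s, hs, -⟩ := hyS
      exact ⟨s, hs⟩
    exact Finset.card_pos.2 this
  have h1 : (gset g S \ P).ncard = 1 := by omega
  obtain ⟨x, hx⟩ := Set.ncard_eq_one.1 h1
  have hyx : y = x := by
    have : y ∈ gset g S \ P := ⟨hyS, hyP⟩
    rw [hx] at this; exact this
  subst hyx
  refine ⟨y, hyP, hyC, hx, ?_⟩
  rw [hQeq]
  apply Set.Subset.antisymm
  · rintro z (hz | hz)
    · exact Set.mem_insert_of_mem _ hz
    · by_cases hzP : z ∈ P
      · exact Set.mem_insert_of_mem _ hzP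
      · have : z ∈ gset g S \ P := ⟨gset_mono hCS g hz, hzP⟩
        rw [hx] at this
        exact this ▸ Set.mem_insert _ _
  · rintro z (rfl | hz)
    · exact Or.inr hyC
    · exact Or.inl hz

/-- The filling process has the diamond property. -/
theorem fillMove_diamond {G : Type*} [Group G] (C S : Finset G) (hCS : C ⊆ S)
    (P Q R : Set G) (hQ : FillMove C S P Q) (hR : FillMove C S P R) (hne : Q ≠ R) :
    ∃ T : Set G, FillMove C S Q T ∧ FillMove C S R T := by
  obtain ⟨hPQ, g₁, hc₁, he₁⟩ := hQ
  obtain ⟨hPR, g₂, hc₂, he₂⟩ := hR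
  obtain ⟨x₁, hx₁P, hx₁C, hx₁S, hQeq⟩ := fill_aux hCS hc₁ he₁ hPQ
  obtain ⟨x₂, hx₂P, hx₂C, hx₂S, hReq⟩ := fill_aux hCS hc₂ he₂ hPR
  have hxne : x₁ ≠ x₂ := fun h => hne (by rw [hQeq, hReq, h])
  -- the common target
  refine ⟨insert x₁ (insert x₂ P), ?_, ?_⟩
  · -- Q ▷ T via g₂
    have hx₁notS₂ : x₁ ∉ gset g₂ S := fun h => hxne (by
      have : x₁ ∈ gset g₂ S \ P := ⟨h, hx₁P⟩
      rw [hx₂S] at this; exact this)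
    have hQS : Q ∩ gset g₂ S = P ∩ gset g₂ S := by
      rw [hQeq]
      ext z
      simp only [Set.mem_inter_iff, Set.mem_insert_iff]
      constructor
      · rintro ⟨rfl | hz, hzS⟩
        · exact absurd hzS hx₁notS₂
        · exact ⟨hz, hzS⟩
      · exact fun ⟨h1, h2⟩ => ⟨Or.inr h1, h2⟩
    refine ⟨?_, g₂, by rw [hQS]; exact hc₂, ?_⟩
    · rw [hQeq]
      constructor
      · intro z hz
        simp only [Set.mem_insert_iff] at hz ⊢
        tauto
      · intro h
        have := h (Set.mem_insert_of_mem _ (Set.mem_insert _ _))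
        simp only [Set.mem_insert_iff] at this
        rcases this with h' | h'
        · exact hxne h'.symm
        · exact hx₂P h'
    · rw [hQeq]
      apply Set.Subset.antisymm
      · rintro z hz
        simp only [Set.mem_insert_iff] at hz
        rcases hz with rfl | rfl | hz
        · exact Or.inl (Set.mem_insert _ _)
        · exact Or.inr hx₂C
        · exact Or.inl (Set.mem_insert_of_mem _ hz)
      · rintro z (hz | hz)
        · simp only [Set.mem_insert_iff] at hz ⊢; tauto
        · by_cases hzP : z ∈ P
          · simp [hzP]
          · have : z ∈ gset g₂ S \ P := ⟨gset_mono hCS g₂ hz, hzP⟩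
            rw [hx₂S, Set.mem_singleton_iff] at this
            subst this
            simp
  · -- R ▷ T via g₁
    have hx₂notS₁ : x₂ ∉ gset g₁ S := fun h => hxne (by
      have : x₂ ∈ gset g₁ S \ P := ⟨h, hx₂P⟩
      rw [hx₁S] at this; exact this.symm)
    have hRS : R ∩ gset g₁ S = P ∩ gset g₁ S := by
      rw [hReq]
      ext z
      simp only [Set.mem_inter_iff, Set.mem_insert_iff]
      constructor
      · rintro ⟨rfl | hz, hzS⟩
        · exact absurd hzS hx₂notS₁
        · exact ⟨hz, hzS⟩
      · exact fun ⟨h1, h2⟩ => ⟨Or.inr h1, h2⟩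
    refine ⟨?_, g₁, by rw [hRS]; exact hc₁, ?_⟩
    · rw [hReq]
      constructor
      · intro z hz
        simp only [Set.mem_insert_iff] at hz ⊢
        tauto
      · intro h
        have := h (Set.mem_insert x₁ _)
        simp only [Set.mem_insert_iff] at this
        rcases this with h' | h'
        · exact hxne h'
        · exact hx₁P h'
    · rw [hReq]
      apply Set.Subset.antisymm
      · rintro z hz
        simp only [Set.mem_insert_iff] at hz
        rcases hz with rfl | rfl | hz
        · exact Or.inr hx₁C
        · exact Or.inl (Set.mem_insert _ _)
        · exact Or.inl (Set.mem_insert_of_mem _ hz)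
      · rintro z (hz | hz)
        · simp only [Set.mem_insert_iff] at hz ⊢; tauto
        · by_cases hzP : z ∈ P
          · simp [hzP]
          · have : z ∈ gset g₁ S \ P := ⟨gset_mono hCS g₁ hz, hzP⟩
            rw [hx₁S, Set.mem_singleton_iff] at this
            subst this
            simp
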